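/- Let X be an invertible real n×n matrix, let W be a symmetric positive definite real n×n matrix, and for μ > 0 define Γ(μ) = X·(XᵀWX + μI)⁻¹·(WX)ᵀ. Then 0 < det(Γ(μ)) < 1 for every μ > 0, and the function μ ↦ det(Γ(μ)) is strictly decreasing on (0, ∞). -/

import Mathlib

open Matrix

section Aux

variable {n : ℕ}

/-- `XᵀWX` is positive definite for `W` posdef and `X` invertible (real case). -/
lemma posDef_conj_aux (X W : Matrix (Fin n) (Fin n) ℝ) (hX : IsUnit X) (hW : W.PosDef) :
    (Xᵀ * W * X).PosDef := by
  have hstar : ∀ v : Fin n → ℝ, star v = v := fun v => funext fun i => star_trivial _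
  refine posDef_iff_dotProduct_mulVec.mpr ⟨?_, ?_⟩
  · rw [← conjTranspose_eq_transpose_of_trivial X]
    exact isHermitian_conjTranspose_mul_mul X hW.1
  · intro x hx
    have hXx : X *ᵥ x ≠ 0 := by
      intro h
      apply hx
      have h2 := congrArg (fun v => X⁻¹ *ᵥ v) h
      simpa [mulVec_mulVec,
        Matrix.nonsing_inv_mul X ((isUnit_iff_isUnit_det X).mp hX), one_mulVec] using h2
    have key : star x ⬝ᵥ (Xᵀ * W * X) *ᵥ x = star (X *ᵥ x) ⬝ᵥ W *ᵥ (X *ᵥ x) := by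
      rw [← mulVec_mulVec, ← mulVec_mulVec, hstar, hstar]
      rw [dotProduct_mulVec x, vecMul_transpose]
    rw [key]
    exact hW.dotProduct_mulVec_pos hXx

/-- determinant of `A + μ • 1` in terms of the eigenvalues of hermitian `A`. -/
lemma det_add_smul_one_aux (A : Matrix (Fin n) (Fin n) ℝ) (hA : A.IsHermitian) (μ : ℝ) :
    (A + μ • (1 : Matrix (Fin n) (Fin n) ℝ)).det = ∏ i, (hA.eigenvalues i + μ) := by
  classical
  set U : Matrix (Fin n) (Fin n) ℝ := (hA.eigenvectorUnitary : Matrix (Fin n) (Fin n) ℝ)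
  have hU : U * star U = 1 := (Matrix.mem_unitaryGroup_iff).mp hA.eigenvectorUnitary.2
  have h1 : A + μ • (1 : Matrix (Fin n) (Fin n) ℝ)
      = U * (diagonal (RCLike.ofReal ∘ hA.eigenvalues) + μ • 1) * star U := by
    rw [mul_add, add_mul]
    congr 1
    · exact hA.spectral_theorem
    · rw [Matrix.mul_smul, mul_one, Matrix.smul_mul, hU]
  rw [h1]
  have hdetU : U.det * (star U).det = 1 := by
    rw [← det_mul, hU, det_one]
  rw [det_mul, det_mul, mul_comm U.det, mul_assoc, ← det_mul, hU, det_one, mul_one]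
  have h2 : (diagonal (RCLike.ofReal ∘ hA.eigenvalues) + μ • (1 : Matrix (Fin n) (Fin n) ℝ))
      = diagonal (fun i => hA.eigenvalues i + μ) := by
    rw [smul_one_eq_diagonal, diagonal_add]
    rfl
  rw [h2, det_diagonal]

end Aux

/-- **Core of Lemma 4 of the paper.** For invertible `X`, symmetric positive
definite `W` and `Γ(μ) = X·(XᵀWX + μI)⁻¹·(WX)ᵀ`, the determinant of `Γ(μ)`
lies strictly between `0` and `1` for every `μ > 0`, and `μ ↦ det(Γ(μ))` is
strictly decreasing on `(0, ∞)`. -/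
theorem det_output_compensator (n : ℕ) (hn : 0 < n)
    (X W : Matrix (Fin n) (Fin n) ℝ) (hX : IsUnit X) (hW : W.PosDef) :
    (∀ μ : ℝ, 0 < μ →
      0 < (X * (Xᵀ * W * X + μ • (1 : Matrix (Fin n) (Fin n) ℝ))⁻¹ * (W * X)ᵀ).det ∧
      (X * (Xᵀ * W * X + μ • (1 : Matrix (Fin n) (Fin n) ℝ))⁻¹ * (W * X)ᵀ).det < 1) ∧
    StrictAntiOn
      (fun μ : ℝ =>
        (X * (Xᵀ * W * X + μ • (1 : Matrix (Fin n) (Fin n) ℝ))⁻¹ * (W * X)ᵀ).det)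
      (Set.Ioi 0) := by
  classical
  set A := Xᵀ * W * X with hAdef
  have hA : A.PosDef := posDef_conj_aux X W hX hW
  set e : Fin n → ℝ := hA.1.eigenvalues with he
  have he_pos : ∀ i, 0 < e i := fun i => hA.eigenvalues_pos i
  have hdetA : A.det = ∏ i, e i := by
    simpa using hA.1.det_eq_prod_eigenvalues
  -- the determinant formula
  have hdet : ∀ μ : ℝ, 0 < μ →
      (X * (A + μ • (1 : Matrix (Fin n) (Fin n) ℝ))⁻¹ * (W * X)ᵀ).det
        = (∏ i, e i) / (∏ i, (e i + μ)) := by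
    intro μ hμ
    have hAm : (A + μ • (1 : Matrix (Fin n) (Fin n) ℝ)).det = ∏ i, (e i + μ) :=
      det_add_smul_one_aux A hA.1 μ
    have hAmpos : 0 < ∏ i, (e i + μ) :=
      Finset.prod_pos fun i _ => add_pos (he_pos i) hμ
    have hinv : ((A + μ • (1 : Matrix (Fin n) (Fin n) ℝ))⁻¹).det
        = (∏ i, (e i + μ))⁻¹ := by
      rw [det_nonsing_inv, hAm, Ring.inverse_eq_inv]
    rw [det_mul, det_mul, hinv, transpose_mul, det_mul, det_transpose, det_transpose]
    have : A.det = X.det * W.det * X.det := by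
      rw [hAdef, det_mul, det_mul, det_transpose]
    rw [div_eq_mul_inv, ← hdetA, this]; ring
  have key : ∀ μ : ℝ, 0 < μ → 0 < (∏ i, e i) / (∏ i, (e i + μ)) ∧
      (∏ i, e i) / (∏ i, (e i + μ)) < 1 := by
    intro μ hμ
    have h1 : 0 < ∏ i, e i := Finset.prod_pos fun i _ => he_pos i
    have h2 : (∏ i, e i) < ∏ i, (e i + μ) := by
      haveI : Nonempty (Fin n) := Fin.pos_iff_nonempty.mp hn
      exact Finset.prod_lt_prod_of_nonempty (fun i _ => he_pos i)
        (fun i _ => by linarith [he_pos i]) Finset.univ_nonempty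
    exact ⟨div_pos h1 (h1.trans h2), (div_lt_one (h1.trans h2)).mpr h2⟩
  constructor
  · intro μ hμ
    rw [hdet μ hμ]
    exact key μ hμ
  · intro μ₁ hμ₁ μ₂ hμ₂ h12
    simp only []
    rw [hdet μ₁ (Set.mem_Ioi.mp hμ₁), hdet μ₂ (Set.mem_Ioi.mp hμ₂)]
    have h1 : 0 < ∏ i, e i := Finset.prod_pos fun i _ => he_pos i
    have hμ₁' : (0:ℝ) < μ₁ := hμ₁
    have hp1 : 0 < ∏ i, (e i + μ₁) :=
      Finset.prod_pos fun i _ => add_pos (he_pos i) hμ₁'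
    have hlt : (∏ i, (e i + μ₁)) < ∏ i, (e i + μ₂) := by
      haveI : Nonempty (Fin n) := Fin.pos_iff_nonempty.mp hn
      exact Finset.prod_lt_prod_of_nonempty
        (fun i _ => add_pos (he_pos i) hμ₁') (fun i _ => by linarith) Finset.univ_nonempty
    exact div_lt_div_of_pos_left h1 hp1 hlt
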